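/- Let (1, u, v, w) be a quaternion basis of type [a,b) in an F-algebra A, and let λ, μ ∈ F be such that t := λ²b + λμb + μ²ab ≠ 0. Set u' = u + λv + μw and v' = λv + μw. Then u'² + u' = (a + t)·1, v'² = t·1, and u'v' = v'(1 + u'); in particular (1, u', v', u'v') is again a quaternion basis of the quaternion algebra spanned by (1, u, v, w). -/

import Mathlib

/-- Let `(1, u, v, w)` be a quaternion basis of type `[a,b)` in an `F`-algebra
`A` (char `F = 2`), and let `λ, μ ∈ F` with `t := λ²b + λμb + μ²ab ≠ 0`. Set
`u' = u + λv + μw` and `v' = λv + μw`. Then `u'² + u' = (a+t)·1`, `v'² = t·1` and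
`u'v' = v'(1 + u')`; in particular `(1, u', v', u'v')` is again a quaternion basis of the
quaternion algebra spanned by `(1, u, v, w)`. -/
theorem stmt10 (F : Type*) [Field F] [CharP F 2]
    (A : Type*) [Ring A] [Algebra F A]
    (a b : F) (hb : b ≠ 0) (u v w : A)
    (hli : LinearIndependent F ![(1 : A), u, v, w]) (hw : w = u * v)
    (hu : u * u + u = a • (1 : A)) (hv : v * v = b • (1 : A))
    (huv : u * v = v * (1 + u))
    (l m : F) (ht : l ^ 2 * b + l * m * b + m ^ 2 * (a * b) ≠ 0) :
    letI t : F := l ^ 2 * b + l * m * b + m ^ 2 * (a * b)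
    letI u' : A := u + l • v + m • w
    letI v' : A := l • v + m • w
    u' * u' + u' = (a + t) • (1 : A) ∧
    v' * v' = t • (1 : A) ∧
    u' * v' = v' * (1 + u') ∧
    LinearIndependent F ![(1 : A), u', v', u' * v'] ∧
    Submodule.span F {(1 : A), u', v', u' * v'} =
      Submodule.span F {(1 : A), u, v, w} := by
  have htwo : (2:F) = 0 := CharP.cast_eq_zero F 2
  have h2 : ∀ x : A, x + x = 0 := fun x => by rw [← two_smul F x, htwo, zero_smul]
  have hneg : ∀ x : A, -x = x := fun x => neg_eq_of_add_eq_zero_left (h2 x)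
  have hsub : ∀ x y : A, x - y = x + y := fun x y => by rw [sub_eq_add_neg, hneg]
  have hw' : u * v = w := hw.symm
  have huv2 : u * v = v + v * u := by rw [huv]; noncomm_ring
  have huu : u * u = a • (1:A) + u := by rw [eq_sub_of_add_eq hu, hsub]
  have hvu : v * u = w + v := by rw [← hw', eq_sub_of_add_eq' huv2.symm, hsub]
  have hwv : w * v = b • u := by rw [hw, mul_assoc, hv, mul_smul_comm, mul_one]
  have hvw : v * w = b • u + b • (1:A) := by
    rw [hw, ← mul_assoc, hvu, add_mul, hwv, hv]
  have huw : u * w = a • v + w := by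
    rw [hw, ← mul_assoc, huu, add_mul, smul_mul_assoc, one_mul, hw']
  have hwu : w * u = a • v := by
    nth_rewrite 1 [hw]
    rw [mul_assoc, hvu, mul_add, ← hw, huw, add_assoc, h2 w, add_zero]
  have hww : w * w = (a*b) • (1:A) := by
    nth_rewrite 1 [hw]
    rw [mul_assoc, hvw, mul_add, mul_smul_comm, mul_smul_comm, mul_one, huu]
    match_scalars <;> (ring_nf; try simp [htwo]; try ring_nf)
  set t : F := l ^ 2 * b + l * m * b + m ^ 2 * (a * b) with htdef
  have hs : l^2 + l*m + m^2*a ≠ 0 := fun h => ht (by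
    show l^2*b + l*m*b + m^2*(a*b) = 0
    linear_combination b * h)
  have e1 : (u + l • v + m • w) * (u + l • v + m • w) + (u + l • v + m • w)
      = (a + t) • (1 : A) := by
    simp only [mul_add, add_mul, mul_smul_comm, smul_mul_assoc, smul_smul]
    simp only [huu, hv, hw', hvu, hwv, hvw, huw, hwu, hww]
    match_scalars <;> (ring_nf; try simp [htwo]; try ring_nf)
    rw [htdef]; ring
  have e2 : (l • v + m • w) * (l • v + m • w) = t • (1 : A) := by
    simp only [mul_add, add_mul, mul_smul_comm, smul_mul_assoc, smul_smul]
    simp only [huu, hv, hw', hvu, hwv, hvw, huw, hwu, hww]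
    match_scalars <;> (ring_nf; try simp [htwo]; try ring_nf)
    rw [htdef]; ring
  have e4 : (u + l • v + m • w) * (l • v + m • w)
      = t • (1:A) + (m * a) • v + (l + m) • w := by
    simp only [mul_add, add_mul, mul_smul_comm, smul_mul_assoc, smul_smul]
    simp only [huu, hv, hw', hvu, hwv, hvw, huw, hwu, hww]
    match_scalars <;> (ring_nf; try simp [htwo]; try ring_nf)
    rw [htdef]; ring
  have e3 : (u + l • v + m • w) * (l • v + m • w)
      = (l • v + m • w) * (1 + (u + l • v + m • w)) := by
    rw [e4]
    simp only [mul_add, add_mul, mul_smul_comm, smul_mul_assoc, smul_smul, mul_one]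
    simp only [huu, hv, hw', hvu, hwv, hvw, huw, hwu, hww]
    match_scalars <;> (ring_nf; try simp [htwo]; try ring_nf)
    rw [htdef]; ring
  -- linear independence
  have li : LinearIndependent F
      ![(1:A), u + l • v + m • w, l • v + m • w,
        (u + l • v + m • w) * (l • v + m • w)] := by
    rw [Fintype.linearIndependent_iff]
    intro g hg
    simp only [Fin.sum_univ_four, Matrix.cons_val_zero, Matrix.cons_val_one,
      Matrix.head_cons, Matrix.cons_val_two, Matrix.tail_cons, Matrix.cons_val_three] at hg
    rw [e4] at hg
    have key := Fintype.linearIndependent_iff.mp hli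
      ![g 0 + g 3 * t, g 1, g 1 * l + g 2 * l + g 3 * (m*a),
        g 1 * m + g 2 * m + g 3 * (l + m)] (by
      simp only [Fin.sum_univ_four, Matrix.cons_val_zero, Matrix.cons_val_one,
        Matrix.head_cons, Matrix.cons_val_two, Matrix.tail_cons, Matrix.cons_val_three]
      rw [← hg]
      match_scalars <;> (ring_nf; try simp [htwo]; try ring_nf))
    have k0 : g 0 + g 3 * t = 0 := by simpa using key 0
    have k1 : g 1 = 0 := by simpa using key 1
    have k2 : g 1 * l + g 2 * l + g 3 * (m*a) = 0 := by simpa using key 2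
    have k3 : g 1 * m + g 2 * m + g 3 * (l + m) = 0 := by simpa using key 3
    have hg3 : g 3 = 0 := by
      have h30 : g 3 * (l^2 + l*m + m^2*a) = 0 := by
        linear_combination l * k3 + m * k2 - (g 1 * l * m + g 2 * l * m) * htwo
      exact (mul_eq_zero.mp h30).resolve_right hs
    have hg2 : g 2 = 0 := by
      rcases eq_or_ne l 0 with hl | hl
      · have hm : m ≠ 0 := by
          intro hm; apply hs; rw [hl, hm]; ring
        have : g 2 * m = 0 := by linear_combination k3 - m * k1 - (l+m) * hg3
        exact (mul_eq_zero.mp this).resolve_right hm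
      · have : g 2 * l = 0 := by linear_combination k2 - l * k1 - (m*a) * hg3
        exact (mul_eq_zero.mp this).resolve_right hl
    have hg0 : g 0 = 0 := by linear_combination k0 - t * hg3
    intro i
    fin_cases i <;> simpa using (by assumption : _)
  -- span equality
  have sp : Submodule.span F {(1:A), u + l • v + m • w, l • v + m • w,
        (u + l • v + m • w) * (l • v + m • w)} =
      Submodule.span F {(1:A), u, v, w} := by
    apply le_antisymm <;> rw [Submodule.span_le] <;> intro x hx <;>
      simp only [Set.mem_insert_iff, Set.mem_singleton_iff] at hx
    · have h1 : (1:A) ∈ Submodule.span F {(1:A), u, v, w} :=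
        Submodule.subset_span (by simp)
      have hus : u ∈ Submodule.span F {(1:A), u, v, w} :=
        Submodule.subset_span (by simp)
      have hvs : v ∈ Submodule.span F {(1:A), u, v, w} :=
        Submodule.subset_span (by simp)
      have hws : w ∈ Submodule.span F {(1:A), u, v, w} :=
        Submodule.subset_span (by simp)
      rcases hx with rfl | rfl | rfl | rfl
      · exact h1
      · exact Submodule.add_mem _ (Submodule.add_mem _ hus (Submodule.smul_mem _ _ hvs))
          (Submodule.smul_mem _ _ hws)
      · exact Submodule.add_mem _ (Submodule.smul_mem _ _ hvs) (Submodule.smul_mem _ _ hws)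
      · rw [e4]
        exact Submodule.add_mem _ (Submodule.add_mem _ (Submodule.smul_mem _ _ h1)
          (Submodule.smul_mem _ _ hvs)) (Submodule.smul_mem _ _ hws)
    · set T := Submodule.span F {(1:A), u + l • v + m • w, l • v + m • w,
        (u + l • v + m • w) * (l • v + m • w)} with hT
      have h1 : (1:A) ∈ T := Submodule.subset_span (by simp)
      have hu'T : u + l • v + m • w ∈ T := Submodule.subset_span (by simp)
      have hv'T : l • v + m • w ∈ T := Submodule.subset_span (by simp)
      have hw'T : (u + l • v + m • w) * (l • v + m • w) ∈ T :=
        Submodule.subset_span (by simp)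
      have hvT : v ∈ T := by
        have hveq : v = (l^2 + l*m + m^2*a)⁻¹ •
            ((l + m) • (l • v + m • w) +
             m • ((u + l • v + m • w) * (l • v + m • w)) + (m * t) • (1:A)) := by
          rw [e4]
          match_scalars <;> field_simp <;> (ring_nf; try simp [htwo]; try ring_nf)
          rw [← add_mul, ← add_mul]; symm; apply mul_inv_cancel₀; contrapose! hs; linear_combination hs
        rw [hveq]
        exact Submodule.smul_mem _ _ (Submodule.add_mem _ (Submodule.add_mem _
          (Submodule.smul_mem _ _ hv'T) (Submodule.smul_mem _ _ hw'T))
          (Submodule.smul_mem _ _ h1))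
      have hwT : w ∈ T := by
        have hweq : w = (l^2 + l*m + m^2*a)⁻¹ •
            ((m * a) • (l • v + m • w) +
             l • ((u + l • v + m • w) * (l • v + m • w)) + (l * t) • (1:A)) := by
          rw [e4]
          match_scalars <;> field_simp <;> (ring_nf; try simp [htwo]; try ring_nf)
          rw [← add_mul, ← add_mul]; symm; apply mul_inv_cancel₀; contrapose! hs; linear_combination hs
        rw [hweq]
        exact Submodule.smul_mem _ _ (Submodule.add_mem _ (Submodule.add_mem _
          (Submodule.smul_mem _ _ hv'T) (Submodule.smul_mem _ _ hw'T))
          (Submodule.smul_mem _ _ h1))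
      have huT : u ∈ T := by
        have hueq : u = (u + l • v + m • w) + (l • v + m • w) := by
          match_scalars <;> (ring_nf; try simp [htwo]; try ring_nf)
        rw [hueq]
        exact Submodule.add_mem _ hu'T hv'T
      rcases hx with rfl | rfl | rfl | rfl
      · exact h1
      · exact huT
      · exact hvT
      · exact hwT
  exact ⟨e1, e2, e3, li, sp⟩
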